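/- (Iteration lemma) Let φ : [0, R₀] → ℝ be non-negative and non-decreasing, and suppose there are constants C₁, C₂ ≥ 0, exponents α₁ > α₂ > 0, and ε ≥ 0 such that φ(r) ≤ C₁ ((r/ρ)^{α₁} + ε) φ(ρ) + C₂ ρ^{α₂} for all 0 < r ≤ ρ ≤ ρ₀ ≤ R₀. Then there exist ε₀ > 0 and c > 0, depending only on C₁, α₁, α₂, such that if ε ≤ ε₀, then φ(r) ≤ c ((r/ρ)^{α₂} φ(ρ) + C₂ r^{α₂}) for all 0 < r ≤ ρ ≤ ρ₀. -/

import Mathlib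

set_option maxHeartbeats 1000000 in
theorem stmt_4 (C₁ α₁ α₂ : ℝ) (hC₁ : 0 ≤ C₁) (hα₂ : 0 < α₂) (hα : α₂ < α₁) :
    ∃ ε₀ > (0 : ℝ), ∃ c > (0 : ℝ),
      ∀ (R₀ ρ₀ C₂ ε : ℝ) (φ : ℝ → ℝ),
        0 < R₀ → 0 < ρ₀ → ρ₀ ≤ R₀ → 0 ≤ C₂ → 0 ≤ ε →
        (∀ x ∈ Set.Icc 0 R₀, 0 ≤ φ x) →
        (∀ x ∈ Set.Icc 0 R₀, ∀ y ∈ Set.Icc 0 R₀, x ≤ y → φ x ≤ φ y) →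
        (∀ r ρ : ℝ, 0 < r → r ≤ ρ → ρ ≤ ρ₀ →
          φ r ≤ C₁ * ((r / ρ) ^ α₁ + ε) * φ ρ + C₂ * ρ ^ α₂) →
        ε ≤ ε₀ →
        ∀ r ρ : ℝ, 0 < r → r ≤ ρ → ρ ≤ ρ₀ →
          φ r ≤ c * ((r / ρ) ^ α₂ * φ ρ + C₂ * r ^ α₂) := by
  classical
  obtain ⟨γ, hγ1, hγ2⟩ : ∃ γ, α₂ < γ ∧ γ < α₁ :=
    ⟨(α₁ + α₂) / 2, by linarith, by linarith⟩
  have hδ : 0 < α₁ - γ := by linarith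
  have hB0 : (0:ℝ) < 4 * (C₁ + 1) := by linarith
  have h4B : (0:ℝ) < 1 / (4 * (C₁ + 1)) := by positivity
  have h4B1 : 1 / (4 * (C₁ + 1)) < 1 := by
    rw [div_lt_one hB0]; linarith
  obtain ⟨τ, hτ0, hτ1, hτδ⟩ :
      ∃ τ : ℝ, 0 < τ ∧ τ < 1 ∧ τ ^ (α₁ - γ) = 1 / (4 * (C₁ + 1)) := by
    refine ⟨(1 / (4 * (C₁ + 1))) ^ (1 / (α₁ - γ)),
      Real.rpow_pos_of_pos h4B _,
      Real.rpow_lt_one h4B.le h4B1 (by positivity), ?_⟩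
    rw [← Real.rpow_mul h4B.le, one_div (α₁ - γ), inv_mul_cancel₀ hδ.ne',
      Real.rpow_one]
  have hτγ : 0 < τ ^ γ := Real.rpow_pos_of_pos hτ0 _
  have hτα₂ : 0 < τ ^ α₂ := Real.rpow_pos_of_pos hτ0 _
  have hτα₁ : 0 < τ ^ α₁ := Real.rpow_pos_of_pos hτ0 _
  have hτα₁eq : τ ^ α₁ = τ ^ γ * (1 / (4 * (C₁ + 1))) := by
    rw [← hτδ, ← Real.rpow_add hτ0]
    congr 1; ring
  have key : C₁ * (2 * τ ^ α₁) ≤ τ ^ γ := by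
    rw [hτα₁eq]
    rw [div_eq_inv_mul, mul_one] at *
    have h2 : 2 * C₁ * τ ^ γ ≤ τ ^ γ * (4 * (C₁ + 1)) := by nlinarith
    have h1 : C₁ * (2 * (τ ^ γ * (4 * (C₁ + 1))⁻¹)) * (4 * (C₁ + 1))
        = 2 * C₁ * τ ^ γ := by field_simp
    rw [← mul_le_mul_iff_of_pos_right hB0, h1]
    linarith
  have hd : τ ^ γ < τ ^ α₂ := Real.rpow_lt_rpow_of_exponent_gt hτ0 hτ1 hγ1
  obtain ⟨M, hM0, hMeq⟩ : ∃ M : ℝ, 0 < M ∧ (τ ^ α₂ - τ ^ γ) * M = 1 :=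
    ⟨(τ ^ α₂ - τ ^ γ)⁻¹, inv_pos.mpr (by linarith),
      mul_inv_cancel₀ (by linarith)⟩
  obtain ⟨c, hc0, hc1, hc2⟩ :
      ∃ c : ℝ, 0 < c ∧ 1 / τ ^ α₂ ≤ c ∧ M / τ ^ α₂ ≤ c := by
    refine ⟨max 1 M / τ ^ α₂, by positivity, ?_, ?_⟩
    · exact div_le_div_of_nonneg_right (le_max_left _ _) hτα₂.le
    · exact div_le_div_of_nonneg_right (le_max_right _ _) hτα₂.le
  refine ⟨τ ^ α₁, hτα₁, c, hc0, ?_⟩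
  intro R₀ ρ₀ C₂ ε φ hR₀ hρ₀ hρR hC₂ hε hφ0 hmono hiter hεε₀ r ρ hr hrρ hρρ₀
  have hρpos : 0 < ρ := lt_of_lt_of_le hr hrρ
  have hρα : 0 < ρ ^ α₂ := Real.rpow_pos_of_pos hρpos _
  have hφρ : 0 ≤ φ ρ := hφ0 ρ ⟨hρpos.le, hρρ₀.trans hρR⟩
  -- one-step inequality
  have step : ∀ ρ', 0 < ρ' → ρ' ≤ ρ₀ →
      φ (τ * ρ') ≤ τ ^ γ * φ ρ' + C₂ * ρ' ^ α₂ := by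
    intro ρ' h0 h1
    have hτρ' : 0 < τ * ρ' := mul_pos hτ0 h0
    have h2 : τ * ρ' ≤ ρ' := mul_le_of_le_one_left h0.le hτ1.le
    have h3 := hiter (τ * ρ') ρ' hτρ' h2 h1
    have h4 : τ * ρ' / ρ' = τ := by field_simp
    rw [h4] at h3
    have hφρ' : 0 ≤ φ ρ' := hφ0 ρ' ⟨h0.le, h1.trans hρR⟩
    have h5 : C₁ * (τ ^ α₁ + ε) ≤ τ ^ γ := by
      have : C₁ * (τ ^ α₁ + ε) ≤ C₁ * (2 * τ ^ α₁) :=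
        mul_le_mul_of_nonneg_left (by linarith) hC₁
      linarith
    have h6 := mul_le_mul_of_nonneg_right h5 hφρ'
    linarith
  have hPnn : 0 ≤ φ ρ + M * C₂ * ρ ^ α₂ :=
    add_nonneg hφρ (mul_nonneg (mul_nonneg hM0.le hC₂) hρα.le)
  -- iteration
  have ind : ∀ k : ℕ, φ (τ ^ k * ρ) ≤ (τ ^ k) ^ α₂ * (φ ρ + M * C₂ * ρ ^ α₂) := by
    intro k
    induction k with
    | zero =>
      simp only [pow_zero, one_mul, Real.one_rpow]
      linarith [mul_nonneg (mul_nonneg hM0.le hC₂) hρα.le]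
    | succ k ih =>
      have hτk : 0 < (τ:ℝ) ^ k := pow_pos hτ0 k
      have h1 : τ ^ (k + 1) * ρ = τ * (τ ^ k * ρ) := by ring
      have h2 : 0 < τ ^ k * ρ := mul_pos hτk hρpos
      have hτk1 : τ ^ k ≤ 1 := pow_le_one₀ hτ0.le hτ1.le
      have h3 : τ ^ k * ρ ≤ ρ₀ :=
        le_trans (mul_le_of_le_one_left hρpos.le hτk1) hρρ₀
      have h4 := step (τ ^ k * ρ) h2 h3
      have h5 : (τ ^ k * ρ) ^ α₂ = (τ ^ k) ^ α₂ * ρ ^ α₂ :=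
        Real.mul_rpow hτk.le hρpos.le
      have h6 : ((τ:ℝ) ^ (k + 1)) ^ α₂ = (τ ^ k) ^ α₂ * τ ^ α₂ := by
        rw [pow_succ, Real.mul_rpow (pow_nonneg hτ0.le k) hτ0.le]
      have hτkα : 0 < ((τ:ℝ) ^ k) ^ α₂ := Real.rpow_pos_of_pos hτk _
      have hkey2 : τ ^ γ * (φ ρ + M * C₂ * ρ ^ α₂) + C₂ * ρ ^ α₂
          ≤ τ ^ α₂ * (φ ρ + M * C₂ * ρ ^ α₂) := by
        have e1 : (τ ^ α₂ - τ ^ γ) * M * (C₂ * ρ ^ α₂) = C₂ * ρ ^ α₂ := by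
          rw [hMeq, one_mul]
        have e2 : 0 ≤ (τ ^ α₂ - τ ^ γ) * φ ρ :=
          mul_nonneg (by linarith) hφρ
        nlinarith [e1, e2]
      calc φ (τ ^ (k + 1) * ρ) = φ (τ * (τ ^ k * ρ)) := by rw [h1]
        _ ≤ τ ^ γ * φ (τ ^ k * ρ) + C₂ * (τ ^ k * ρ) ^ α₂ := h4
        _ ≤ τ ^ γ * ((τ ^ k) ^ α₂ * (φ ρ + M * C₂ * ρ ^ α₂))
            + C₂ * ((τ ^ k) ^ α₂ * ρ ^ α₂) := by
            rw [h5]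
            have := mul_le_mul_of_nonneg_left ih hτγ.le
            linarith
        _ = (τ ^ k) ^ α₂ * (τ ^ γ * (φ ρ + M * C₂ * ρ ^ α₂) + C₂ * ρ ^ α₂) := by
            ring
        _ ≤ (τ ^ k) ^ α₂ * (τ ^ α₂ * (φ ρ + M * C₂ * ρ ^ α₂)) := by
            exact mul_le_mul_of_nonneg_left hkey2 hτkα.le
        _ = (τ ^ (k + 1)) ^ α₂ * (φ ρ + M * C₂ * ρ ^ α₂) := by rw [h6]; ring
  -- choose k with τ^(k+1) < r/ρ ≤ τ^k
  have hrρ' : 0 < r / ρ := div_pos hr hρpos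
  have hex : ∃ n : ℕ, τ ^ (n + 1) < r / ρ := by
    obtain ⟨n, hn⟩ := exists_pow_lt_of_lt_one hrρ' hτ1
    exact ⟨n, lt_of_le_of_lt
      (pow_le_pow_of_le_one hτ0.le hτ1.le (Nat.le_succ n)) hn⟩
  obtain ⟨k, hk1, hk2⟩ : ∃ k : ℕ, τ ^ (k + 1) < r / ρ ∧ r / ρ ≤ τ ^ k := by
    refine ⟨Nat.find hex, Nat.find_spec hex, ?_⟩
    cases h : Nat.find hex with
    | zero => simpa [pow_zero] using (div_le_one hρpos).2 hrρ
    | succ m =>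
      have hm : m < Nat.find hex := by omega
      exact le_of_not_gt (Nat.find_min hex hm)
  have hτk : 0 < (τ:ℝ) ^ k := pow_pos hτ0 k
  have hrk : r ≤ τ ^ k * ρ := (div_le_iff₀ hρpos).mp hk2
  have hτkρ : τ ^ k * ρ ≤ ρ :=
    mul_le_of_le_one_left hρpos.le (pow_le_one₀ hτ0.le hτ1.le)
  have h1 : φ r ≤ φ (τ ^ k * ρ) :=
    hmono r ⟨hr.le, le_trans (hrρ.trans hρρ₀) hρR⟩ (τ ^ k * ρ)
      ⟨(mul_pos hτk hρpos).le, le_trans (hτkρ.trans hρρ₀) hρR⟩ hrk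
  have h2 : ((τ:ℝ) ^ k) ^ α₂ < (r / ρ) ^ α₂ / τ ^ α₂ := by
    have hlt : ((τ:ℝ) ^ (k + 1)) ^ α₂ < (r / ρ) ^ α₂ :=
      Real.rpow_lt_rpow (pow_nonneg hτ0.le _) hk1 hα₂
    rw [pow_succ, Real.mul_rpow (pow_nonneg hτ0.le k) hτ0.le] at hlt
    rw [lt_div_iff₀ hτα₂]
    exact hlt
  have h3 : φ r ≤ (r / ρ) ^ α₂ / τ ^ α₂ * (φ ρ + M * C₂ * ρ ^ α₂) :=
    le_trans (h1.trans (ind k)) (mul_le_mul_of_nonneg_right h2.le hPnn)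
  have hsplit : (r / ρ) ^ α₂ * ρ ^ α₂ = r ^ α₂ := by
    rw [Real.div_rpow hr.le hρpos.le, div_mul_cancel₀ _ (ne_of_gt hρα)]
  have ht1 : 0 ≤ (r / ρ) ^ α₂ * φ ρ :=
    mul_nonneg (Real.rpow_nonneg hrρ'.le _) hφρ
  have ht2 : 0 ≤ C₂ * r ^ α₂ := mul_nonneg hC₂ (Real.rpow_nonneg hr.le _)
  calc φ r ≤ (r / ρ) ^ α₂ / τ ^ α₂ * (φ ρ + M * C₂ * ρ ^ α₂) := h3
    _ = (1 / τ ^ α₂) * ((r / ρ) ^ α₂ * φ ρ)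
        + (M / τ ^ α₂) * (C₂ * ((r / ρ) ^ α₂ * ρ ^ α₂)) := by ring
    _ = (1 / τ ^ α₂) * ((r / ρ) ^ α₂ * φ ρ)
        + (M / τ ^ α₂) * (C₂ * r ^ α₂) := by rw [hsplit]
    _ ≤ c * ((r / ρ) ^ α₂ * φ ρ + C₂ * r ^ α₂) := by
        have u1 := mul_le_mul_of_nonneg_right hc1 ht1
        have u2 := mul_le_mul_of_nonneg_right hc2 ht2
        nlinarith [u1, u2]
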